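/- arXiv:1611.01883 — 5 statements merged into one kernel-verified Lean document; each statement's English description precedes it below -/
import Mathlib

section
/- Let A be an n×n integer matrix, let l ≥ 1, and suppose the matrix C := ∑_{i=0}^{m-1} A^{il} has nonzero determinant, where N = lm. Define T_N := {x ∈ ℤⁿ : kx ∈ im(1 - A^N) for some positive integer k} and T_l similarly with A^l. Then T_N = T_l. -/
/-- If `C = ∑_{i<m} (A^l)^i` has nonzero determinant, then `T_{lm} = T_l`, where
`T_j = {x : kx ∈ im(1 - A^j) for some k ≥ 1}`. -/
theorem stmt12 (n l m : ℕ) (hl : 1 ≤ l) (hm : 1 ≤ m) (A : Matrix (Fin n) (Fin n) ℤ)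
    (hdet : (∑ i ∈ Finset.range m, (A ^ l) ^ i).det ≠ 0) :
    {x : Fin n → ℤ | ∃ k : ℕ, 0 < k ∧
        (k : ℤ) • x ∈ LinearMap.range (Matrix.mulVecLin (1 - A ^ (l * m)))} =
    {x : Fin n → ℤ | ∃ k : ℕ, 0 < k ∧
        (k : ℤ) • x ∈ LinearMap.range (Matrix.mulVecLin (1 - A ^ l))} := by
  set C : Matrix (Fin n) (Fin n) ℤ := ∑ i ∈ Finset.range m, (A ^ l) ^ i with hC
  have hfact : 1 - A ^ (l * m) = (1 - A ^ l) * C := by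
    have h1 : (A ^ l - 1) * C = (A ^ l) ^ m - 1 := mul_geom_sum (A ^ l) m
    have h2 : (1 - A ^ l) * C = 1 - (A ^ l) ^ m := by
      rw [← neg_sub (A ^ l) 1, neg_mul, h1, neg_sub]
    rw [h2, pow_mul]
  ext x
  simp only [Set.mem_setOf_eq, LinearMap.mem_range]
  constructor
  · rintro ⟨k, hk, y, hy⟩
    exact ⟨k, hk, C.mulVec y, by
      rw [Matrix.mulVecLin_apply] at hy ⊢
      rw [Matrix.mulVec_mulVec, ← hfact, hy]⟩
  · rintro ⟨k, hk, y, hy⟩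
    rw [Matrix.mulVecLin_apply] at hy
    refine ⟨k * C.det.natAbs, Nat.mul_pos hk (Int.natAbs_pos.mpr hdet), ?_⟩
    refine ⟨C.det.sign • C.adjugate.mulVec y, ?_⟩
    have hsgn : C.det.sign * C.det = (C.det.natAbs : ℤ) := by
      rcases lt_trichotomy C.det 0 with h | h | h
      · rw [Int.sign_eq_neg_one_iff_neg.mpr h, ← Int.abs_eq_natAbs, abs_of_neg h]; ring
      · exact absurd h hdet
      · rw [Int.sign_eq_one_iff_pos.mpr h, ← Int.abs_eq_natAbs, abs_of_pos h]; ring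
    rw [Matrix.mulVecLin_apply, Matrix.mulVec_smul, hfact, Matrix.mulVec_mulVec,
      Matrix.mul_assoc, Matrix.mul_adjugate, Matrix.mul_smul, Matrix.mul_one,
      Matrix.smul_mulVec, hy, smul_smul, smul_smul]
    push_cast
    congr 1
    rw [Int.abs_eq_natAbs, ← hsgn]
    ring
end

section
/- Let A be an n×n integer matrix, l, m ≥ 1, N = lm, and suppose T_N = T_l, where T_j := {x ∈ ℤⁿ : kx ∈ im(1 - A^j) for some k ≥ 1}. Then the map a + im(1 - A^N) + tor ↦ a + im(1 - A^l) + tor is a well-defined group isomorphism from coker(1 - A^N)/tor(coker(1 - A^N)) onto coker(1 - A^l)/tor(coker(1 - A^l)). -/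
set_option synthInstance.maxHeartbeats 1000000
set_option maxHeartbeats 1000000

lemma aux_comap_torsion (n : ℕ) (B : Matrix (Fin n) (Fin n) ℤ) :
    ((Submodule.comap (LinearMap.range B.mulVecLin).mkQ
        (Submodule.torsion ℤ ((Fin n → ℤ) ⧸ LinearMap.range B.mulVecLin))) : Set (Fin n → ℤ)) =
    {x | ∃ k : ℕ, 0 < k ∧ (k : ℤ) • x ∈ LinearMap.range B.mulVecLin} := by
  ext x
  simp only [Set.mem_setOf_eq, SetLike.mem_coe, Submodule.mem_comap,
    Submodule.mem_torsion_iff]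
  constructor
  · rintro ⟨⟨a, ha⟩, h⟩
    have ha' : a ≠ 0 := nonZeroDivisors.coe_ne_zero ⟨a, ha⟩
    refine ⟨a.natAbs, Int.natAbs_pos.2 ha', ?_⟩
    have : a • x ∈ LinearMap.range B.mulVecLin := by
      rwa [← Submodule.Quotient.mk_eq_zero, Submodule.Quotient.mk_smul,
        ← Submodule.mkQ_apply]
    rcases Int.natAbs_eq a with h1 | h1
    · rwa [← h1]
    · rw [← neg_neg ((a.natAbs : ℤ) • x), ← neg_smul, ← h1]
      exact Submodule.neg_mem _ this
  · rintro ⟨k, hk, h⟩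
    refine ⟨⟨(k : ℤ), mem_nonZeroDivisors_of_ne_zero (by exact_mod_cast hk.ne')⟩, ?_⟩
    show (k : ℤ) • (LinearMap.range B.mulVecLin).mkQ x = 0
    rw [← map_smul, Submodule.mkQ_apply, Submodule.Quotient.mk_eq_zero]
    exact h

/-- If `T_{lm} = T_l`, then `a ↦ a` induces an isomorphism
`coker(1 - A^{lm})/tor ≅ coker(1 - A^l)/tor`. -/
theorem stmt13 (n l m : ℕ) (hl : 1 ≤ l) (hm : 1 ≤ m) (A : Matrix (Fin n) (Fin n) ℤ)
    (hT : {x : Fin n → ℤ | ∃ k : ℕ, 0 < k ∧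
        (k : ℤ) • x ∈ LinearMap.range (Matrix.mulVecLin (1 - A ^ (l * m)))} =
      {x : Fin n → ℤ | ∃ k : ℕ, 0 < k ∧
        (k : ℤ) • x ∈ LinearMap.range (Matrix.mulVecLin (1 - A ^ l))}) :
    ∃ e : (((Fin n → ℤ) ⧸ LinearMap.range (Matrix.mulVecLin (1 - A ^ (l * m)))) ⧸
            Submodule.torsion ℤ
              ((Fin n → ℤ) ⧸ LinearMap.range (Matrix.mulVecLin (1 - A ^ (l * m))))) ≃ₗ[ℤ]
          (((Fin n → ℤ) ⧸ LinearMap.range (Matrix.mulVecLin (1 - A ^ l))) ⧸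
            Submodule.torsion ℤ
              ((Fin n → ℤ) ⧸ LinearMap.range (Matrix.mulVecLin (1 - A ^ l)))),
      ∀ a : Fin n → ℤ,
        e (Submodule.Quotient.mk (Submodule.Quotient.mk a)) =
          Submodule.Quotient.mk (Submodule.Quotient.mk a) := by
  set R1 := LinearMap.range (Matrix.mulVecLin (1 - A ^ (l * m)))
  set R2 := LinearMap.range (Matrix.mulVecLin (1 - A ^ l))
  set T1 := Submodule.comap R1.mkQ (Submodule.torsion ℤ ((Fin n → ℤ) ⧸ R1))
  set T2 := Submodule.comap R2.mkQ (Submodule.torsion ℤ ((Fin n → ℤ) ⧸ R2))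
  have hEq : T1 = T2 := SetLike.coe_injective (by
    rw [show (T1 : Set (Fin n → ℤ)) = _ from aux_comap_torsion n _,
      show (T2 : Set (Fin n → ℤ)) = _ from aux_comap_torsion n _]
    exact hT)
  have h1 : R1 ≤ T1 := fun x hx => by
    simp only [T1, Submodule.mem_comap, Submodule.mkQ_apply]
    rw [(Submodule.Quotient.mk_eq_zero R1).2 hx]
    exact Submodule.zero_mem _
  have h2 : R2 ≤ T2 := fun x hx => by
    simp only [T2, Submodule.mem_comap, Submodule.mkQ_apply]
    rw [(Submodule.Quotient.mk_eq_zero R2).2 hx]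
    exact Submodule.zero_mem _
  have htor1 : Submodule.torsion ℤ ((Fin n → ℤ) ⧸ R1) = T1.map R1.mkQ := by
    rw [Submodule.map_comap_eq, Submodule.range_mkQ, top_inf_eq]
  have htor2 : Submodule.torsion ℤ ((Fin n → ℤ) ⧸ R2) = T2.map R2.mkQ := by
    rw [Submodule.map_comap_eq, Submodule.range_mkQ, top_inf_eq]
  refine ⟨(Submodule.quotEquivOfEq _ _ htor1).trans
    ((Submodule.quotientQuotientEquivQuotient R1 T1 h1).trans
    ((Submodule.quotEquivOfEq T1 T2 hEq).trans
    ((Submodule.quotientQuotientEquivQuotient R2 T2 h2).symm.trans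
    (Submodule.quotEquivOfEq _ _ htor2.symm)))), fun a => ?_⟩
  have key : (Submodule.quotientQuotientEquivQuotient R2 T2 h2)
      (Submodule.Quotient.mk (Submodule.Quotient.mk a)) = Submodule.Quotient.mk a :=
    Submodule.quotientQuotientEquivQuotientAux_mk_mk R2 T2 h2 a
  simp only [LinearEquiv.trans_apply, Submodule.quotEquivOfEq_mk]
  rw [show (Submodule.quotientQuotientEquivQuotient R1 T1 h1)
      (Submodule.Quotient.mk (Submodule.Quotient.mk a)) = Submodule.Quotient.mk a from
    Submodule.quotientQuotientEquivQuotientAux_mk_mk R1 T1 h1 a,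
    Submodule.quotEquivOfEq_mk, ← key, LinearEquiv.symm_apply_apply,
    Submodule.quotEquivOfEq_mk]
end

section
/- Let A be an n×n integer matrix whose index set is partitioned into blocks Λ_0, …, Λ_{l-1} such that A maps ℤ^{Λ_j} into ℤ^{Λ_{j-1 mod l}} for each j (so A^l preserves each block). Then for each j, the inclusion ℤ^{Λ_j} ↪ ℤⁿ induces a group isomorphism ℤ^{Λ_j}/(1 - A^l)(ℤ^{Λ_j}) ≅ ℤⁿ/im(1 - A). -/
set_option synthInstance.maxHeartbeats 1000000
set_option maxHeartbeats 1000000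

theorem quotAux {M : Type*} [AddCommGroup M] [Module ℤ M] (Q R : Submodule ℤ M)
    (K : Submodule ℤ Q)
    (hker : ∀ y : Q, ((y : M) ∈ R ↔ y ∈ K))
    (hsurj : ∀ x : M, ∃ y : Q, x - (y : M) ∈ R) :
    ∃ e : (Q ⧸ K) ≃ₗ[ℤ] (M ⧸ R),
      ∀ y : Q, e (Submodule.Quotient.mk y) = Submodule.Quotient.mk (y : M) := by
  let f : Q →ₗ[ℤ] (M ⧸ R) :=
    { toFun := fun y => Submodule.Quotient.mk (y : M)
      map_add' := fun a b => rfl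
      map_smul' := fun c y => by
        have := map_zsmul (R.mkQ.toAddMonoidHom.comp Q.subtype.toAddMonoidHom) c y
        simpa using this }
  have hfapply : ∀ y : Q, f y = Submodule.Quotient.mk (y : M) := fun y => rfl
  have hs : Function.Surjective f := by
    intro q
    obtain ⟨x, rfl⟩ := Submodule.mkQ_surjective _ q
    obtain ⟨y, hy⟩ := hsurj x
    exact ⟨y, by rw [hfapply, Submodule.mkQ_apply, Submodule.Quotient.eq]; simpa using neg_mem hy⟩
  have hk : LinearMap.ker f = K := by
    ext y
    rw [LinearMap.mem_ker, hfapply, Submodule.Quotient.mk_eq_zero]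
    exact hker y
  refine ⟨(Submodule.quotEquivOfEq _ _ hk.symm).trans (f.quotKerEquivOfSurjective hs), ?_⟩
  intro y
  simp only [LinearEquiv.trans_apply, Submodule.quotEquivOfEq_mk]
  rw [← hfapply]
  rfl

open Fin.CommRing in
/-- If the blocks `Λ_j` are cyclically shifted by `A` (so `A^l` preserves each block), then
the inclusion `ℤ^{Λ_j} ↪ ℤⁿ` induces an isomorphism
`ℤ^{Λ_j}/(1 - A^l)(ℤ^{Λ_j}) ≅ ℤⁿ/im(1 - A)`. -/
theorem stmt17 (n l : ℕ) [NeZero l] (A : Matrix (Fin n) (Fin n) ℤ) (Λ : Fin n → Fin l)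
    (P : Fin l → Submodule ℤ (Fin n → ℤ))
    (hP : ∀ (j : Fin l) (x : Fin n → ℤ), x ∈ P j ↔ ∀ i, Λ i ≠ j → x i = 0)
    (hshift : ∀ j : Fin l, Submodule.map (Matrix.mulVecLin A) (P j) ≤ P (j - 1))
    (j : Fin l) :
    ∃ e : (P j ⧸ Submodule.comap (P j).subtype
            (Submodule.map (Matrix.mulVecLin (1 - A ^ l)) (P j))) ≃ₗ[ℤ]
          ((Fin n → ℤ) ⧸ LinearMap.range (Matrix.mulVecLin (1 - A))),
      ∀ (x : Fin n → ℤ) (hx : x ∈ P j),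
        e (Submodule.Quotient.mk (⟨x, hx⟩ : P j)) = Submodule.Quotient.mk x := by
  classical
  -- block projections
  set π : Fin l → (Fin n → ℤ) →ₗ[ℤ] (Fin n → ℤ) := fun k =>
    { toFun := fun x i => if Λ i = k then x i else 0
      map_add' := by intro x y; funext i; by_cases h : Λ i = k <;> simp [h]
      map_smul' := by intro c x; funext i; by_cases h : Λ i = k <;> simp [h] } with hπ
  have hπmem : ∀ k x, π k x ∈ P k := by
    intro k x; rw [hP]; intro i hi; simp [hπ, hi]
  have hπsum : ∀ x, ∑ k, π k x = x := by
    intro x; funext i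
    simp [hπ, Finset.sum_apply, Finset.sum_ite_eq]
  have hπeq : ∀ k x, x ∈ P k → π k x = x := by
    intro k x hx; funext i
    by_cases h : Λ i = k
    · simp [hπ, h]
    · simp [hπ, h, (hP k x).1 hx i h]
  have hπne : ∀ k m x, x ∈ P m → m ≠ k → π k x = 0 := by
    intro k m x hx hmk; funext i
    by_cases h : Λ i = k
    · have : Λ i ≠ m := by rw [h]; exact fun e => hmk e.symm
      simp [hπ, h, (hP m x).1 hx i this]
    · simp [hπ, h]
  -- A maps P k to P (k-1)
  have hA : ∀ (k : Fin l) x, x ∈ P k → A.mulVecLin x ∈ P (k - 1) :=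
    fun k x hx => hshift k ⟨x, hx, rfl⟩
  -- powers
  have hpow : ∀ (m : ℕ) (k : Fin l) x, x ∈ P k → (A ^ m).mulVecLin x ∈ P (k - (m : Fin l)) := by
    intro m
    induction m with
    | zero => intro k x hx; simpa using hx
    | succ m ih =>
      intro k x hx
      have h1 : (A ^ (m + 1)).mulVecLin x = A.mulVecLin ((A ^ m).mulVecLin x) := by
        rw [pow_succ', Matrix.mulVecLin_mul]; rfl
      rw [h1]
      have h2 := hA _ _ (ih k x hx)
      have h3 : k - (m : Fin l) - 1 = k - ((m + 1 : ℕ) : Fin l) := by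
        push_cast; ring
      rwa [h3] at h2
  -- geometric series: range (1 - A^m) ≤ range (1 - A)
  have hgeom : ∀ (m : ℕ) (x : Fin n → ℤ),
      (1 - A ^ m).mulVecLin x ∈ LinearMap.range (Matrix.mulVecLin (1 - A)) := by
    intro m x
    have hfac : (1 - A) * ∑ i ∈ Finset.range m, A ^ i = 1 - A ^ m := by
      calc (1 - A) * ∑ i ∈ Finset.range m, A ^ i
          = -((A - 1) * ∑ i ∈ Finset.range m, A ^ i) := by rw [← neg_sub A 1, neg_mul]
        _ = -(A ^ m - 1) := by rw [mul_geom_sum]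
        _ = 1 - A ^ m := by rw [neg_sub]
    refine ⟨(∑ i ∈ Finset.range m, A ^ i).mulVecLin x, ?_⟩
    rw [← hfac, Matrix.mulVecLin_mul]; rfl
  -- surjectivity data
  have hsurj : ∀ x : Fin n → ℤ, ∃ y : P j,
      x - (y : Fin n → ℤ) ∈ LinearMap.range (Matrix.mulVecLin (1 - A)) := by
    intro x
    set y : Fin n → ℤ := ∑ k, (A ^ ((k - j : Fin l)).val).mulVecLin (π k x) with hy
    have hymem : y ∈ P j := by
      rw [hy]
      refine Submodule.sum_mem _ (fun k _ => ?_)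
      have := hpow ((k - j : Fin l)).val k (π k x) (hπmem k x)
      rwa [Fin.cast_val_eq_self, sub_sub_cancel] at this
    refine ⟨⟨y, hymem⟩, ?_⟩
    have hxy : x - y = ∑ k, (1 - A ^ ((k - j : Fin l)).val).mulVecLin (π k x) := by
      rw [hy]
      have h1 : x = ∑ k, π k x := (hπsum x).symm
      calc x - ∑ k, (A ^ ((k - j : Fin l)).val).mulVecLin (π k x)
          = ∑ k, (π k x - (A ^ ((k - j : Fin l)).val).mulVecLin (π k x)) := by
            rw [Finset.sum_sub_distrib, ← h1]
        _ = ∑ k, (1 - A ^ ((k - j : Fin l)).val).mulVecLin (π k x) := by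
            refine Finset.sum_congr rfl (fun k _ => ?_)
            simp [Matrix.mulVecLin_apply, Matrix.sub_mulVec, Matrix.one_mulVec]
    rw [hxy]
    exact Submodule.sum_mem _ (fun k _ => hgeom _ _)
  -- kernel characterization
  have hker : ∀ y : P j, ((y : Fin n → ℤ) ∈ LinearMap.range (Matrix.mulVecLin (1 - A)) ↔
      y ∈ Submodule.comap (P j).subtype
        (Submodule.map (Matrix.mulVecLin (1 - A ^ l)) (P j))) := by
    rintro ⟨y, hy⟩
    simp only [Submodule.mem_comap, Submodule.coe_subtype, Submodule.mem_map,
      LinearMap.mem_range]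
    constructor
    · rintro ⟨b, hb⟩
      set p : Fin l → (Fin n → ℤ) := fun k => π k b with hp
      have hAb : ∀ k : Fin l, π k (A.mulVecLin b) = A.mulVecLin (p (k + 1)) := by
        intro k
        have hb' : A.mulVecLin b = ∑ m, A.mulVecLin (p m) := by
          rw [← map_sum]
          congr 1
          exact (hπsum b).symm
        rw [hb', map_sum]
        rw [Finset.sum_eq_single (k + 1)]
        · exact hπeq k _ (by simpa using hA (k + 1) _ (hπmem (k + 1) b))
        · intro m _ hm
          refine hπne k (m - 1) _ (hA m _ (hπmem m b)) ?_
          intro h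
          exact hm (by rw [← h]; ring)
        · intro h; exact absurd (Finset.mem_univ _) h
      have hπy : ∀ k : Fin l, π k y = p k - A.mulVecLin (p (k + 1)) := by
        intro k
        rw [← hb]
        have h1 : (1 - A).mulVecLin b = b - A.mulVecLin b := by
          simp [Matrix.mulVecLin_apply, Matrix.sub_mulVec, Matrix.one_mulVec]
        rw [h1, map_sub, hAb k]
      have hrec : ∀ k : Fin l, k ≠ j → p k = A.mulVecLin (p (k + 1)) := by
        intro k hk
        have h0 : π k y = 0 := hπne k j y hy (fun h => hk h.symm)
        have h2 := hπy k
        rw [h0] at h2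
        exact sub_eq_zero.mp h2.symm
      have key : ∀ t : ℕ, t ≤ l - 1 →
          p (j + ((l - t : ℕ) : Fin l)) = (A ^ t).mulVecLin (p j) := by
        intro t
        induction t with
        | zero =>
          intro _
          simp [Fin.natCast_self]
        | succ t ih =>
          intro ht
          have hl : 0 < l := Nat.pos_of_ne_zero (NeZero.ne l)
          have ht' : t ≤ l - 1 := Nat.le_of_succ_le ht
          have h1 : 1 ≤ l - (t + 1) := by omega
          have h2 : l - (t + 1) < l := by omega
          have hne : j + ((l - (t + 1) : ℕ) : Fin l) ≠ j := by
            intro h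
            have h3 : ((l - (t + 1) : ℕ) : Fin l) = 0 := by
              have := congrArg (fun z => z - j) h
              simpa [add_sub_cancel_right] using this
            rw [Fin.natCast_eq_zero] at h3
            exact absurd (Nat.le_of_dvd (by omega) h3) (by omega)
          have hstep := hrec _ hne
          have hsucc : j + ((l - (t + 1) : ℕ) : Fin l) + 1 = j + ((l - t : ℕ) : Fin l) := by
            have h4 : ((l - (t + 1) : ℕ) : Fin l) + 1 = ((l - t : ℕ) : Fin l) := by
              have h5 : (l - (t + 1)) + 1 = l - t := by omega
              rw [← h5]
              push_cast
              ring
            rw [add_assoc, h4]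
          rw [hstep, hsucc, ih ht']
          rw [pow_succ', Matrix.mulVecLin_mul]
          rfl
      have hj1 : p (j + 1) = (A ^ (l - 1)).mulVecLin (p j) := by
        have hl : 0 < l := Nat.pos_of_ne_zero (NeZero.ne l)
        have h6 := key (l - 1) le_rfl
        rwa [show l - (l - 1) = 1 by omega, Nat.cast_one] at h6
      refine ⟨p j, hπmem j b, ?_⟩
      have hy' : y = π j y := (hπeq j y hy).symm
      have h6 : A.mulVecLin (p (j + 1)) = (A ^ l).mulVecLin (p j) := by
        have hl : 0 < l := Nat.pos_of_ne_zero (NeZero.ne l)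
        have h7 : A ^ l = A * A ^ (l - 1) := by
          conv_lhs => rw [show l = (l - 1) + 1 from by omega]
          rw [pow_succ']
        rw [hj1, h7, Matrix.mulVecLin_mul]
        rfl
      rw [hy', hπy j, h6]
      simp [Matrix.mulVecLin_apply, Matrix.sub_mulVec, Matrix.one_mulVec]
    · rintro ⟨c, _, hc⟩
      rw [← hc]
      exact hgeom l c
  obtain ⟨e, he⟩ := quotAux (P j) (LinearMap.range (Matrix.mulVecLin (1 - A))) _ hker hsurj
  exact ⟨e, fun x hx => he ⟨x, hx⟩⟩
end

section
/- Let A be an n×n integer matrix whose index set is partitioned into l blocks cyclically shifted by A (A·ℤ^{Λ_j} ⊆ ℤ^{Λ_{j-1 mod l}}). Then coker(1 - A^l) is isomorphic to the direct sum of l copies of coker(1 - A), and consequently the rank of coker(1 - A^l) equals l times the rank of coker(1 - A). -/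
set_option synthInstance.maxHeartbeats 1000000
set_option maxHeartbeats 1000000

set_option linter.unusedSectionVars false

open LinearMap

variable {nn ll : ℕ} [NeZero ll]

section FinRing
open Fin.CommRing

/-- component projection -/
def cproj (Λ : Fin nn → Fin ll) (j : Fin ll) : (Fin nn → ℤ) →ₗ[ℤ] (Fin nn → ℤ) where
  toFun x i := if Λ i = j then x i else 0
  map_add' x y := by funext i; by_cases h : Λ i = j <;> simp [h]
  map_smul' r x := by funext i; by_cases h : Λ i = j <;> simp [h]

lemma cproj_apply (Λ : Fin nn → Fin ll) (j : Fin ll) (x : Fin nn → ℤ) (i : Fin nn) :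
    cproj Λ j x i = if Λ i = j then x i else 0 := rfl

def Supp (Λ : Fin nn → Fin ll) (j : Fin ll) (x : Fin nn → ℤ) : Prop :=
  ∀ i, Λ i ≠ j → x i = 0

lemma supp_cproj (Λ : Fin nn → Fin ll) (j : Fin ll) (x : Fin nn → ℤ) :
    Supp Λ j (cproj Λ j x) := fun i hi => by simp [cproj_apply, hi]

lemma cproj_of_supp {Λ : Fin nn → Fin ll} {j : Fin ll} {x : Fin nn → ℤ}
    (h : Supp Λ j x) : cproj Λ j x = x := by
  funext i
  rw [cproj_apply]
  by_cases hi : Λ i = j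
  · simp [hi]
  · simp [hi, h i hi]

lemma cproj_of_supp_ne {Λ : Fin nn → Fin ll} {j k : Fin ll} {x : Fin nn → ℤ}
    (hjk : k ≠ j) (h : Supp Λ k x) : cproj Λ j x = 0 := by
  funext i
  rw [cproj_apply]
  by_cases hi : Λ i = j
  · simp [hi, h i (hi ▸ hjk ∘ Eq.symm ∘ id)]
  · simp [hi]

lemma sum_cproj (Λ : Fin nn → Fin ll) (x : Fin nn → ℤ) :
    ∑ j, cproj Λ j x = x := by
  funext i
  rw [Finset.sum_apply]
  simp only [cproj_apply]
  rw [Finset.sum_ite_eq Finset.univ (Λ i) (fun _ => x i)]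
  simp

set_option linter.unusedSectionVars false

section Dyn
variable {Λ : Fin nn → Fin ll} {f : (Fin nn → ℤ) →ₗ[ℤ] (Fin nn → ℤ)}
  (hf : ∀ j : Fin ll, ∀ x, Supp Λ j x → Supp Λ (j - 1) (f x))

include hf

lemma supp_pow (m : ℕ) (j : Fin ll) (x : Fin nn → ℤ) (hx : Supp Λ j x) :
    Supp Λ (j - (m : Fin ll)) ((f ^ m) x) := by
  induction m with
  | zero => simpa using hx
  | succ m ih =>
    have h1 : (f ^ (m + 1)) x = f ((f ^ m) x) := by
      rw [pow_succ', Module.End.mul_apply]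
    have h2 := hf _ _ ih
    rw [h1]
    have : j - ((m : Fin ll) + 1) = j - (m : Fin ll) - 1 := by ring
    rw [Nat.cast_add, Nat.cast_one, this]
    exact h2

lemma cproj_pow (m : ℕ) (k : Fin ll) (x : Fin nn → ℤ) :
    cproj Λ k ((f ^ m) x) = (f ^ m) (cproj Λ (k + (m : Fin ll)) x) := by
  conv_lhs => rw [← sum_cproj Λ x]
  rw [map_sum, map_sum]
  refine Finset.sum_eq_single (k + (m : Fin ll)) ?_ ?_ |>.trans ?_
  · intro j _ hj
    refine cproj_of_supp_ne ?_ (supp_pow hf m j _ (supp_cproj Λ j x))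
    intro hc
    exact hj (by rw [← hc]; ring)
  · intro h; exact absurd (Finset.mem_univ _) h
  · exact cproj_of_supp (by
      have := supp_pow hf m (k + (m : Fin ll)) _ (supp_cproj Λ (k + (m : Fin ll)) x)
      simpa using this)

end Dyn

lemma sub_pow_mem_range (f : (Fin nn → ℤ) →ₗ[ℤ] (Fin nn → ℤ)) (m : ℕ) (y : Fin nn → ℤ) :
    y - (f ^ m) y ∈ LinearMap.range (1 - f) := by
  refine ⟨∑ k ∈ Finset.range m, (f ^ k) y, ?_⟩
  induction m with
  | zero => simp
  | succ m ih =>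
    rw [Finset.sum_range_succ, map_add, ih]
    have : (1 - f) ((f ^ m) y) = (f ^ m) y - (f ^ (m + 1)) y := by
      rw [LinearMap.sub_apply, Module.End.one_apply, pow_succ', Module.End.mul_apply]
    rw [this]
    abel

section Main
variable {Λ : Fin nn → Fin ll} {f : (Fin nn → ℤ) →ₗ[ℤ] (Fin nn → ℤ)}
  (hf : ∀ j : Fin ll, ∀ x, Supp Λ j x → Supp Λ (j - 1) (f x))

include hf

lemma exists_rep (j : Fin ll) (y : Fin nn → ℤ) :
    ∃ z, Supp Λ j z ∧ y - z ∈ LinearMap.range (1 - f) := by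
  refine ⟨∑ k, (f ^ ((k - j : Fin ll).val)) (cproj Λ k y), ?_, ?_⟩
  · intro i hi
    rw [Finset.sum_apply]
    refine Finset.sum_eq_zero fun k _ => ?_
    have h := supp_pow hf ((k - j).val) k _ (supp_cproj Λ k y)
    rw [Fin.cast_val_eq_self] at h
    have hkj : k - (k - j) = j := by ring
    rw [hkj] at h
    exact h i hi
  · have heq : y - ∑ k, (f ^ ((k - j : Fin ll).val)) (cproj Λ k y)
        = ∑ k, (cproj Λ k y - (f ^ ((k - j : Fin ll).val)) (cproj Λ k y)) := by
      rw [Finset.sum_sub_distrib]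
      congr 1
      exact (sum_cproj Λ y).symm
    rw [heq]
    exact Submodule.sum_mem _ fun k _ => sub_pow_mem_range f _ _

lemma cproj_one_sub (k : Fin ll) (y : Fin nn → ℤ) :
    cproj Λ k ((1 - f) y) = cproj Λ k y - f (cproj Λ (k + 1) y) := by
  rw [LinearMap.sub_apply, Module.End.one_apply, map_sub]
  congr 1
  have h := cproj_pow hf 1 k y
  rw [pow_one, Nat.cast_one] at h
  exact h

lemma supp_mem_range {j : Fin ll} {v : Fin nn → ℤ} (hv : Supp Λ j v)
    (hr : v ∈ LinearMap.range (1 - f)) : v ∈ LinearMap.range (1 - f ^ ll) := by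
  obtain ⟨y, hy⟩ := hr
  have hstep : ∀ k : Fin ll, k ≠ j → cproj Λ k y = f (cproj Λ (k + 1) y) := by
    intro k hk
    have h0 : cproj Λ k v = 0 := cproj_of_supp_ne (Ne.symm hk) hv
    rw [← hy, cproj_one_sub hf] at h0
    exact (sub_eq_zero.mp h0)
  have hchain : ∀ m : ℕ, m ≤ ll - 1 →
      cproj Λ (j + 1) y = (f ^ m) (cproj Λ (j + 1 + (m : Fin ll)) y) := by
    intro m
    induction m with
    | zero => intro _; simp
    | succ m ih =>
      intro hm
      have hm' : m ≤ ll - 1 := Nat.le_of_succ_le hm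
      have hne : j + 1 + (m : Fin ll) ≠ j := by
        intro hc
        have hc2 : j + ((m + 1 : ℕ) : Fin ll) = j := by
          calc j + ((m + 1 : ℕ) : Fin ll) = j + 1 + (m : Fin ll) := by push_cast; ring
            _ = j := hc
        have h3 : ((m + 1 : ℕ) : Fin ll) = 0 := by
          have := add_eq_left.mp hc2
          exact this
        rw [Fin.natCast_eq_zero] at h3
        have h4 := Nat.le_of_dvd (Nat.succ_pos m) h3
        have h5 : ll ≠ 0 := NeZero.ne ll
        omega
      rw [ih hm', hstep _ hne]
      have hcast : j + 1 + (m : Fin ll) + 1 = j + 1 + ((m + 1 : ℕ) : Fin ll) := by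
        push_cast; ring
      rw [hcast, ← Module.End.mul_apply, ← pow_succ]
  have hll1 : (1 : ℕ) + (ll - 1) = ll := by
    have := NeZero.pos ll; omega
  have hto : j + 1 + (((ll - 1 : ℕ)) : Fin ll) = j := by
    have h0 : ((ll : ℕ) : Fin ll) = 0 := by
      rw [Fin.natCast_eq_zero]
    calc j + 1 + ((ll - 1 : ℕ) : Fin ll) = j + ((1 + (ll - 1) : ℕ) : Fin ll) := by
          push_cast; ring
      _ = j + ((ll : ℕ) : Fin ll) := by rw [hll1]
      _ = j := by rw [h0, add_zero]
  have hkey : cproj Λ (j + 1) y = (f ^ (ll - 1)) (cproj Λ j y) := by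
    rw [hchain (ll - 1) le_rfl, hto]
  refine ⟨cproj Λ j y, ?_⟩
  have hv2 : v = cproj Λ j y - f ((f ^ (ll - 1)) (cproj Λ j y)) := by
    rw [← hkey, ← cproj_one_sub hf, hy, cproj_of_supp hv]
  have hsucc : ll - 1 + 1 = ll := by have := NeZero.pos ll; omega
  rw [← Module.End.mul_apply, ← pow_succ', hsucc] at hv2
  rw [LinearMap.sub_apply, Module.End.one_apply]
  exact hv2.symm

lemma aux_equiv :
    Nonempty (((Fin nn → ℤ) ⧸ LinearMap.range (1 - f ^ ll)) ≃ₗ[ℤ]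
      (Fin ll → ((Fin nn → ℤ) ⧸ LinearMap.range (1 - f)))) := by
  classical
  set Q := (Fin nn → ℤ) ⧸ LinearMap.range (1 - f) with hQ
  set Φ : (Fin nn → ℤ) →ₗ[ℤ] (Fin ll → Q) :=
    LinearMap.pi fun j => (LinearMap.range (1 - f)).mkQ ∘ₗ cproj Λ j with hΦ
  have hΦapp : ∀ x j, Φ x j = (LinearMap.range (1 - f)).mkQ (cproj Λ j x) := fun x j => rfl
  have hker : LinearMap.ker Φ = LinearMap.range (1 - f ^ ll) := by
    ext x
    simp only [LinearMap.mem_ker]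
    constructor
    · intro hx
      have hmem : ∀ j, cproj Λ j x ∈ LinearMap.range (1 - f) := by
        intro j
        have := congrFun hx j
        rw [hΦapp] at this
        rwa [Submodule.mkQ_apply, Pi.zero_apply, Submodule.Quotient.mk_eq_zero] at this
      have : ∀ j : Fin ll, cproj Λ j x ∈ LinearMap.range (1 - f ^ ll) := fun j =>
        supp_mem_range hf (supp_cproj Λ j x) (hmem j)
      rw [← sum_cproj Λ x]
      exact Submodule.sum_mem _ fun j _ => this j
    · rintro ⟨y, rfl⟩
      funext j
      rw [hΦapp, Submodule.mkQ_apply, Pi.zero_apply, Submodule.Quotient.mk_eq_zero]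
      have hc : cproj Λ j ((1 - f ^ ll) y) = cproj Λ j y - (f ^ ll) (cproj Λ j y) := by
        rw [LinearMap.sub_apply, Module.End.one_apply, map_sub]
        congr 1
        have h := cproj_pow hf ll j y
        have h0 : ((ll : ℕ) : Fin ll) = 0 := by rw [Fin.natCast_eq_zero]
        rw [h0, add_zero] at h
        exact h
      rw [hc]
      exact sub_pow_mem_range f ll (cproj Λ j y)
  have hsurj : Function.Surjective Φ := by
    intro w
    have hrep : ∀ j : Fin ll, ∃ z, Supp Λ j z ∧
        (LinearMap.range (1 - f)).mkQ z = w j := by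
      intro j
      obtain ⟨y, hy⟩ := Submodule.mkQ_surjective _ (w j)
      obtain ⟨z, hz1, hz2⟩ := exists_rep hf j y
      refine ⟨z, hz1, ?_⟩
      rw [← hy]
      exact (Submodule.Quotient.eq _).mpr hz2 |>.symm
    choose z hz1 hz2 using hrep
    refine ⟨∑ j, z j, ?_⟩
    funext j
    rw [hΦapp]
    have hcz : cproj Λ j (∑ k, z k) = z j := by
      rw [map_sum]
      refine (Finset.sum_eq_single j ?_ ?_).trans (cproj_of_supp (hz1 j))
      · intro k _ hk
        exact cproj_of_supp_ne hk (hz1 k)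
      · intro h; exact absurd (Finset.mem_univ _) h
    rw [hcz]
    exact hz2 j
  exact ⟨(Submodule.quotEquivOfEq _ _ hker.symm).trans
    (Φ.quotKerEquivOfSurjective hsurj)⟩

end Main

lemma rank_fin_fun_int (m : ℕ) {Q : Type} [AddCommGroup Q] [Module ℤ Q] :
    Module.rank ℤ (Fin m → Q) = (m : Cardinal) * Module.rank ℤ Q := by
  induction m with
  | zero =>
    have : Subsingleton (Fin 0 → Q) := ⟨fun a b => funext fun i => i.elim0⟩
    rw [rank_subsingleton']
    simp
  | succ m ih =>
    set T : (Fin (m + 1) → Q) →ₗ[ℤ] (Fin m → Q) :=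
      { toFun := fun x i => x i.succ
        map_add' := fun x y => rfl
        map_smul' := fun c x => rfl } with hT
    have hsurj : Function.Surjective T := by
      intro y
      refine ⟨Fin.cons 0 y, ?_⟩
      funext i
      simp [hT, Fin.cons_succ]
    have h := LinearMap.rank_range_add_rank_ker T
    rw [LinearMap.range_eq_top.mpr hsurj, rank_top] at h
    have hmem : ∀ q : Q, Fin.cons q (0 : Fin m → Q) ∈ LinearMap.ker T := by
      intro q
      rw [LinearMap.mem_ker]
      funext i
      simp [hT, Fin.cons_succ]
    let F : LinearMap.ker T →ₗ[ℤ] Q :=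
      { toFun := fun x => x.1 0
        map_add' := fun x y => rfl
        map_smul' := fun c x => by
          simp only [RingHom.id_apply]
          have e1 := int_smul_eq_zsmul
            (AddCommGroup.toIntModule (Fin (m + 1) → Q)) c (↑x : Fin (m + 1) → Q)
          have e2 := int_smul_eq_zsmul ‹Module ℤ Q› c ((↑x : Fin (m + 1) → Q) 0)
          exact (congrFun e1 0).trans e2.symm }
    have hFapp : ∀ x : LinearMap.ker T, F x = (↑x : Fin (m + 1) → Q) 0 := fun x => rfl
    have hbij : Function.Bijective F := by
      constructor
      · intro x y hxy
        apply Subtype.ext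
        funext i
        refine Fin.cases ?_ (fun k => ?_) i
        · rw [← hFapp, ← hFapp, hxy]
        · have hx : (↑x : Fin (m + 1) → Q) k.succ = 0 :=
            congrFun (LinearMap.mem_ker.mp x.2) k
          have hy : (↑y : Fin (m + 1) → Q) k.succ = 0 :=
            congrFun (LinearMap.mem_ker.mp y.2) k
          rw [hx, hy]
      · intro q
        refine ⟨⟨Fin.cons q 0, hmem q⟩, ?_⟩
        rw [hFapp]
        simp
    have e : LinearMap.ker T ≃ₗ[ℤ] Q := LinearEquiv.ofBijective F hbij
    rw [ih, e.rank_eq] at h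
    rw [← h]
    push_cast
    ring

lemma mulVecLin_pow (m : ℕ) (A : Matrix (Fin nn) (Fin nn) ℤ) :
    Matrix.mulVecLin (A ^ m) = (Matrix.mulVecLin A) ^ m := by
  induction m with
  | zero => rw [pow_zero, pow_zero, Matrix.mulVecLin_one]; rfl
  | succ m ih => rw [pow_succ, pow_succ, Matrix.mulVecLin_mul, ih]; rfl

lemma mulVecLin_one_sub (B : Matrix (Fin nn) (Fin nn) ℤ) :
    Matrix.mulVecLin (1 - B) = 1 - Matrix.mulVecLin B := by
  apply LinearMap.ext
  intro x
  simp [Matrix.mulVecLin_apply, Matrix.sub_mulVec, Matrix.one_mulVec,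
    LinearMap.sub_apply, Module.End.one_apply]

end FinRing

/-- If the blocks `Λ_j` are cyclically shifted by `A`, then `coker(1 - A^l)` is isomorphic
to `l` copies of `coker(1 - A)`, and its rank is `l` times the rank of `coker(1 - A)`. -/
theorem stmt18 (n l : ℕ) [NeZero l] (A : Matrix (Fin n) (Fin n) ℤ) (Λ : Fin n → Fin l)
    (P : Fin l → Submodule ℤ (Fin n → ℤ))
    (hP : ∀ (j : Fin l) (x : Fin n → ℤ), x ∈ P j ↔ ∀ i, Λ i ≠ j → x i = 0)
    (hshift : ∀ j : Fin l, Submodule.map (Matrix.mulVecLin A) (P j) ≤ P (j - 1)) :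
    Nonempty (((Fin n → ℤ) ⧸ LinearMap.range (Matrix.mulVecLin (1 - A ^ l))) ≃ₗ[ℤ]
        (Fin l → ((Fin n → ℤ) ⧸ LinearMap.range (Matrix.mulVecLin (1 - A))))) ∧
    Module.rank ℤ ((Fin n → ℤ) ⧸ LinearMap.range (Matrix.mulVecLin (1 - A ^ l))) =
      (l : Cardinal) *
        Module.rank ℤ ((Fin n → ℤ) ⧸ LinearMap.range (Matrix.mulVecLin (1 - A))) := by
  have h1 : Matrix.mulVecLin (1 - A) = 1 - Matrix.mulVecLin A := mulVecLin_one_sub A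
  have h2 : Matrix.mulVecLin (1 - A ^ l) = 1 - (Matrix.mulVecLin A) ^ l := by
    rw [mulVecLin_one_sub, mulVecLin_pow]
  have hf : ∀ j : Fin l, ∀ x, Supp Λ j x → Supp Λ (j - 1) (Matrix.mulVecLin A x) := by
    intro j x hx
    have hxP : x ∈ P j := (hP j x).mpr hx
    have : Matrix.mulVecLin A x ∈ P (j - 1) := hshift j ⟨x, hxP, rfl⟩
    exact (hP _ _).mp this
  have hne := aux_equiv hf
  rw [h1, h2]
  refine ⟨hne, ?_⟩
  obtain ⟨e⟩ := hne
  rw [e.rank_eq, rank_fin_fun_int]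
end

section
/- Let A be an n×n integer matrix and suppose C := ∑_{i=0}^{m-1} A^{il} has nonzero determinant. If x ∈ ℤⁿ and k ∈ ℕ satisfy kx = (1 - A^l)y for some y ∈ ℤⁿ, then (k·det C)·x ∈ im(1 - A^{lm}); conversely any x with kx ∈ im(1 - A^{lm}) for some k ≥ 1 satisfies kx ∈ im(1 - A^l). Hence the rational spans of im(1 - A^l) and im(1 - A^{lm}) in ℚⁿ coincide. -/
/-- Passing between `im(1 - A^l)` and `im(1 - A^{lm})` up to integer multiples, when
`C = ∑_{i<m} (A^l)^i` has nonzero determinant; consequently the rational spans of the two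
images coincide. -/
theorem stmt19 (n l m : ℕ) (hl : 1 ≤ l) (hm : 1 ≤ m) (A : Matrix (Fin n) (Fin n) ℤ)
    (hdet : (∑ i ∈ Finset.range m, (A ^ l) ^ i).det ≠ 0) :
    (∀ (x y : Fin n → ℤ) (k : ℕ), (k : ℤ) • x = (1 - A ^ l).mulVec y →
      ((k : ℤ) * (∑ i ∈ Finset.range m, (A ^ l) ^ i).det) • x ∈
        LinearMap.range (Matrix.mulVecLin (1 - A ^ (l * m)))) ∧
    (∀ (x : Fin n → ℤ) (k : ℕ), 0 < k →
      (k : ℤ) • x ∈ LinearMap.range (Matrix.mulVecLin (1 - A ^ (l * m))) →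
      (k : ℤ) • x ∈ LinearMap.range (Matrix.mulVecLin (1 - A ^ l))) ∧
    Submodule.span ℚ ((fun (x : Fin n → ℤ) (i : Fin n) => (x i : ℚ)) ''
        (LinearMap.range (Matrix.mulVecLin (1 - A ^ l)) : Set (Fin n → ℤ))) =
      Submodule.span ℚ ((fun (x : Fin n → ℤ) (i : Fin n) => (x i : ℚ)) ''
        (LinearMap.range (Matrix.mulVecLin (1 - A ^ (l * m))) : Set (Fin n → ℤ))) := by
  set C : Matrix (Fin n) (Fin n) ℤ := ∑ i ∈ Finset.range m, (A ^ l) ^ i with hCdef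
  have hC : (1 - A ^ (l * m)) = (1 - A ^ l) * C := by
    have h := mul_geom_sum (A ^ l) m
    rw [← pow_mul] at h
    have : -(A ^ l - 1) * C = -(A ^ (l * m) - 1) := by rw [neg_mul, h]
    simpa [neg_sub] using this.symm
  have hfac : ∀ y : Fin n → ℤ,
      (1 - A ^ (l * m)).mulVec (C.adjugate.mulVec y) = C.det • (1 - A ^ l).mulVec y := by
    intro y
    rw [Matrix.mulVec_mulVec, hC, mul_assoc, Matrix.mul_adjugate, Matrix.mul_smul, mul_one,
      Matrix.smul_mulVec]
  refine ⟨?_, ?_, ?_⟩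
  · intro x y k hxy
    refine ⟨C.adjugate.mulVec y, ?_⟩
    rw [Matrix.mulVecLin_apply, hfac, ← hxy, smul_smul, mul_comm]
  · rintro x k hk ⟨z, hz⟩
    refine ⟨C.mulVec z, ?_⟩
    rw [Matrix.mulVecLin_apply, Matrix.mulVec_mulVec, ← hC]
    exact hz
  · have hcast : ∀ (d : ℤ) (x : Fin n → ℤ),
        (fun (x : Fin n → ℤ) (i : Fin n) => (x i : ℚ)) (d • x) =
          (d : ℚ) • (fun i => (x i : ℚ)) := by
      intro d x; funext i; simp [smul_eq_mul]
    apply le_antisymm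
    · rw [Submodule.span_le]
      rintro v ⟨x, ⟨y, rfl⟩, rfl⟩
      have hmem : C.det • (Matrix.mulVecLin (1 - A ^ l) y) ∈
          (LinearMap.range (Matrix.mulVecLin (1 - A ^ (l * m))) : Set (Fin n → ℤ)) := by
        exact ⟨C.adjugate.mulVec y, by rw [Matrix.mulVecLin_apply, hfac, Matrix.mulVecLin_apply]⟩
      have h1 : ((fun (x : Fin n → ℤ) (i : Fin n) => (x i : ℚ)) ''
          (LinearMap.range (Matrix.mulVecLin (1 - A ^ (l * m))) : Set (Fin n → ℤ))) ⊆
          (Submodule.span ℚ ((fun (x : Fin n → ℤ) (i : Fin n) => (x i : ℚ)) ''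
          (LinearMap.range (Matrix.mulVecLin (1 - A ^ (l * m))) : Set (Fin n → ℤ))) : Set _) :=
        Submodule.subset_span
      have h2 := h1 ⟨_, hmem, rfl⟩
      rw [hcast] at h2
      have hd : (C.det : ℚ) ≠ 0 := Int.cast_ne_zero.mpr hdet
      have := Submodule.smul_mem _ ((C.det : ℚ)⁻¹) h2
      rwa [smul_smul, inv_mul_cancel₀ hd, one_smul] at this
    · rw [Submodule.span_le]
      rintro v ⟨x, ⟨z, rfl⟩, rfl⟩
      apply Submodule.subset_span
      refine ⟨_, ⟨C.mulVec z, ?_⟩, rfl⟩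
      rw [Matrix.mulVecLin_apply, Matrix.mulVecLin_apply, Matrix.mulVec_mulVec, ← hC]
end
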